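/- For every n ∈ ℕ and every x ∈ ℝ, ∫ (x − i·y)ⁿ dγ₁(y) = He_n(x), where the integral is over y ∈ ℝ with respect to the standard Gaussian measure γ₁, the integrand takes values in ℂ, and He_n(x) is the value at x of the n-th probabilists' Hermite polynomial. (This is the explicit computation defining the Segal–Bargmann transform: integrating a holomorphic monomial over the imaginary degrees of freedom yields the Wick monomial.) -/

import Mathlib

open MeasureTheory ProbabilityTheory Polynomial


theorem SB_derivative_hermite (n : ℕ) : derivative (hermite n) = n • hermite (n - 1) := by
  induction n using Nat.strong_induction_on with
  | _ n ih =>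
    match n with
    | 0 => simp [hermite]
    | 1 => simp [hermite_one, hermite_zero]
    | (m+2) =>
      have ih1 := ih (m+1) (by omega)
      rw [hermite_succ (m+1), derivative_sub, derivative_mul, derivative_X, one_mul, ih1,
        derivative_smul]
      simp only [Nat.add_sub_cancel]
      rw [mul_smul_comm, add_sub_assoc, ← smul_sub, ← hermite_succ m]
      show hermite (m+1) + (m+1) • hermite (m+1) = (m+2) • hermite (m+1)
      rw [show ((m+2) • hermite (m+1) : Polynomial ℤ) = (m+1) • hermite (m+1) + hermite (m+1)
        from succ_nsmul _ _]
      exact add_comm (hermite (m+1)) ((m+1) • hermite (m+1))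

theorem SB_pdf_eq (y : ℝ) :
    gaussianPDFReal 0 1 y = (Real.sqrt (2*Real.pi))⁻¹ * Real.exp (-(1/2) * y^2) := by
  rw [gaussianPDFReal]
  push_cast
  norm_num
  left
  ring

theorem SB_meas (g : ℝ → ℂ) :
    ∫ y, g y ∂(gaussianReal 0 1) = ∫ y, ((gaussianPDFReal 0 1 y : ℝ) : ℂ) * g y := by
  rw [gaussianReal_of_var_ne_zero 0 one_ne_zero]
  simp only [gaussianPDF_def, ENNReal.ofReal]
  rw [integral_withDensity_eq_integral_smul ((measurable_gaussianPDFReal 0 1).real_toNNReal) g]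
  congr 1; funext y
  rw [NNReal.smul_def, Real.coe_toNNReal _ (gaussianPDFReal_nonneg 0 1 y), Complex.real_smul]

theorem SB_int_real (m : ℕ) : Integrable (fun y : ℝ => y^m * Real.exp (-(1/2) * y^2)) := by
  have := integrable_rpow_mul_exp_neg_mul_sq (b := 1/2) (by norm_num)
    (s := m) (lt_of_lt_of_le neg_one_lt_zero (Nat.cast_nonneg m))
  simpa [Real.rpow_natCast] using this

theorem SB_int (x : ℝ) (j k : ℕ) :
    Integrable (fun y : ℝ =>
      (y:ℂ)^j * ((x:ℂ) - Complex.I*y)^k * (Real.exp (-(1/2) * y^2) : ℂ)) := by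
  have key : (fun y : ℝ => (y:ℂ)^j * ((x:ℂ) - Complex.I*y)^k * (Real.exp (-(1/2) * y^2) : ℂ))
      = fun y => ∑ m ∈ Finset.range (k+1),
          ((x:ℂ)^m * (-Complex.I)^(k-m) * (k.choose m)) *
            ((y^(j + (k-m)) * Real.exp (-(1/2) * y^2) : ℝ) : ℂ) := by
    funext y
    rw [sub_eq_add_neg, add_pow, Finset.mul_sum, Finset.sum_mul]
    refine Finset.sum_congr rfl fun m hm => ?_
    have h1 : (-(Complex.I * (y:ℂ)))^(k-m) = (-Complex.I)^(k-m) * (y:ℂ)^(k-m) := by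
      rw [← neg_mul, mul_pow]
    push_cast
    rw [h1]
    ring
  rw [key]
  exact integrable_finset_sum _ fun m _ => ((SB_int_real _).ofReal.const_mul _)

theorem SB_ibp (x : ℝ) (k : ℕ) :
    ∫ y : ℝ, (y:ℂ) * ((x:ℂ) - Complex.I*y)^k * (Real.exp (-(1/2) * y^2) : ℂ)
      = (k:ℂ) * (-Complex.I) *
        ∫ y : ℝ, ((x:ℂ) - Complex.I*y)^(k-1) * (Real.exp (-(1/2) * y^2) : ℂ) := by
  set u : ℝ → ℂ := fun y => ((x:ℂ) - Complex.I*y)^k with hu_def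
  set v : ℝ → ℂ := fun y => (Real.exp (-(1/2) * y^2) : ℂ) with hv_def
  set u' : ℝ → ℂ := fun y => (k:ℂ) * ((x:ℂ) - Complex.I*y)^(k-1) * (-Complex.I) with hu'_def
  set v' : ℝ → ℂ := fun y => ((-y * Real.exp (-(1/2) * y^2) : ℝ) : ℂ) with hv'_def
  have hu : ∀ y : ℝ, HasDerivAt u (u' y) y := by
    intro y
    have h0 : HasDerivAt (fun y : ℝ => (y:ℂ)) 1 y := by simpa using (hasDerivAt_id y).ofReal_comp
    have h1 : HasDerivAt (fun y : ℝ => (x:ℂ) - Complex.I * y) (-Complex.I) y := by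
      simpa using (h0.const_mul Complex.I).const_sub (x:ℂ)
    have hg := hasDerivAt_pow k ((x:ℂ) - Complex.I * y)
    have h2 := HasDerivAt.scomp y hg h1
    simp only [hu_def, hu'_def]
    convert h2 using 1
    · rfl
    · rfl
    rw [smul_eq_mul]; ring
  have hv : ∀ y : ℝ, HasDerivAt v (v' y) y := by
    intro y
    have h0 : HasDerivAt (fun y : ℝ => -(1/2) * y^2) (-(1/2) * (2 * y^1)) y :=
      (hasDerivAt_pow 2 y).const_mul _
    have h0' : HasDerivAt (fun y : ℝ => -(1/2) * y^2) (-y) y := by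
      convert h0 using 1; ring
    have h2 := (h0'.exp).ofReal_comp
    simp only [hv_def, hv'_def]
    convert h2 using 1
    push_cast
    ring
  have huv' : Integrable (u * v') := by
    have h : (u * v') = fun y : ℝ => (-1 : ℂ) *
        ((y:ℂ)^1 * ((x:ℂ) - Complex.I*y)^k * (Real.exp (-(1/2) * y^2) : ℂ)) := by
      funext y; simp only [Pi.mul_apply, hu_def, hv'_def]; push_cast; ring
    rw [h]; exact (SB_int x 1 k).const_mul _
  have hu'v : Integrable (u' * v) := by
    have h : (u' * v) = fun y : ℝ => ((k:ℂ) * (-Complex.I)) *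
        ((y:ℂ)^0 * ((x:ℂ) - Complex.I*y)^(k-1) * (Real.exp (-(1/2) * y^2) : ℂ)) := by
      funext y; simp only [Pi.mul_apply, hu'_def, hv_def]; push_cast; ring
    rw [h]; exact (SB_int x 0 (k-1)).const_mul _
  have huv : Integrable (u * v) := by
    have h : (u * v) = fun y : ℝ =>
        ((y:ℂ)^0 * ((x:ℂ) - Complex.I*y)^k * (Real.exp (-(1/2) * y^2) : ℂ)) := by
      funext y; simp only [Pi.mul_apply, hu_def, hv_def]; push_cast; ring
    rw [h]; exact SB_int x 0 k
  have H := integral_mul_deriv_eq_deriv_mul_of_integrable (fun y _ => hu y) (fun y _ => hv y) huv' hu'v huv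
  have e1 : ∫ y : ℝ, u y * v' y
      = - ∫ y : ℝ, (y:ℂ) * ((x:ℂ) - Complex.I*y)^k * (Real.exp (-(1/2) * y^2) : ℂ) := by
    rw [← integral_neg]
    congr 1; funext y
    simp only [hu_def, hv'_def]; push_cast; ring
  have e2 : ∫ y : ℝ, u' y * v y
      = ((k:ℂ) * (-Complex.I)) *
        ∫ y : ℝ, ((x:ℂ) - Complex.I*y)^(k-1) * (Real.exp (-(1/2) * y^2) : ℂ) := by
    rw [← integral_const_mul]
    congr 1; funext y
    simp only [hu'_def, hv_def]; ring
  rw [e1, e2] at H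
  exact neg_injective H

/-- For every `n ∈ ℕ` and `x ∈ ℝ`,
`∫ (x − i·y)ⁿ dγ₁(y) = He_n(x)`, where the integral over `y ∈ ℝ` is with
respect to the standard Gaussian measure `γ₁` and `He_n` is the `n`-th
probabilists' Hermite polynomial (integrating the holomorphic monomial over
the imaginary degrees of freedom yields the Wick monomial: the
Segal–Bargmann transform). -/
theorem stmt10 (n : ℕ) (x : ℝ) :
    ∫ y : ℝ, ((x : ℂ) - Complex.I * (y : ℂ)) ^ n ∂(gaussianReal 0 1) =
      Polynomial.aeval (x : ℂ) (Polynomial.hermite n) := by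

  have hG : ∀ k : ℕ, (∫ y : ℝ, ((x:ℂ) - Complex.I * y)^k ∂(gaussianReal 0 1))
      = ((Real.sqrt (2*Real.pi))⁻¹ : ℂ) *
        ∫ y : ℝ, ((x:ℂ) - Complex.I*y)^k * (Real.exp (-(1/2) * y^2) : ℂ) := by
    intro k
    rw [SB_meas, ← integral_const_mul]
    congr 1; funext y
    rw [SB_pdf_eq y]
    push_cast
    ring
  set G : ℕ → ℂ :=
    fun k => ∫ y : ℝ, ((x:ℂ) - Complex.I*y)^k * (Real.exp (-(1/2) * y^2) : ℂ) with hGdef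
  have hrec : ∀ k : ℕ, G (k+1) = x * G k - k * G (k-1) := by
    intro k
    have hsplit : (fun y : ℝ => ((x:ℂ) - Complex.I*y)^(k+1) * (Real.exp (-(1/2) * y^2) : ℂ))
        = fun y : ℝ =>
            (x:ℂ) * (((x:ℂ) - Complex.I*y)^k * (Real.exp (-(1/2) * y^2) : ℂ))
          - Complex.I * ((y:ℂ) * ((x:ℂ) - Complex.I*y)^k * (Real.exp (-(1/2) * y^2) : ℂ)) := by
      funext y; ring
    have i1 : Integrable (fun y : ℝ =>
        (x:ℂ) * (((x:ℂ) - Complex.I*y)^k * (Real.exp (-(1/2) * y^2) : ℂ))) := by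
      refine Integrable.const_mul ?_ _
      simpa using SB_int x 0 k
    have i2 : Integrable (fun y : ℝ =>
        Complex.I * ((y:ℂ) * ((x:ℂ) - Complex.I*y)^k * (Real.exp (-(1/2) * y^2) : ℂ))) := by
      refine Integrable.const_mul ?_ _
      simpa using SB_int x 1 k
    simp only [hGdef]
    rw [hsplit, integral_sub i1 i2, integral_const_mul, integral_const_mul, SB_ibp x k]
    set A : ℂ := ∫ y : ℝ, ((x:ℂ) - Complex.I*y)^(k-1) * (Real.exp (-(1/2) * y^2) : ℂ)
    set B : ℂ := ∫ y : ℝ, ((x:ℂ) - Complex.I*y)^k * (Real.exp (-(1/2) * y^2) : ℂ)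
    linear_combination ((k:ℂ) * A) * Complex.I_sq
  have hherm : ∀ k : ℕ, (aeval (x:ℂ)) (hermite (k+1))
      = x * (aeval (x:ℂ)) (hermite k) - k * (aeval (x:ℂ)) (hermite (k-1)) := by
    intro k
    rw [hermite_succ, map_sub, map_mul, aeval_X, SB_derivative_hermite, map_nsmul, nsmul_eq_mul]
  have hbase : ((Real.sqrt (2*Real.pi))⁻¹ : ℂ) * G 0 = 1 := by
    have h2π : Real.sqrt (2*Real.pi) ≠ 0 := ne_of_gt (Real.sqrt_pos.2 (by positivity))
    simp only [hGdef, pow_zero, one_mul]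
    have hio : (∫ y : ℝ, (Real.exp (-(1/2) * y^2) : ℂ))
        = ((∫ y : ℝ, Real.exp (-(1/2) * y^2) : ℝ) : ℂ) := integral_ofReal
    rw [hio, integral_gaussian, show Real.pi/(1/2 : ℝ) = 2*Real.pi by ring]
    rw [← Complex.ofReal_inv, ← Complex.ofReal_mul, inv_mul_cancel₀ h2π]
    norm_num
  suffices h : ∀ k : ℕ, ((Real.sqrt (2*Real.pi))⁻¹ : ℂ) * G k = (aeval (x:ℂ)) (hermite k) by
    rw [hG n]; exact h n
  intro k
  induction k using Nat.strong_induction_on with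
  | _ k ih =>
    match k with
    | 0 => rw [hbase]; simp [hermite]
    | (m+1) =>
      rw [hrec m, hherm m, ← ih m (by omega), ← ih (m-1) (by omega)]
      ring
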